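/- For every tournament T, Σ_{(u,v) arc of T} C(u,v)·(C(u,v) − 1) = 2 · r_4(T), where r_4(T) is the number of 4-element subsets of V(T) whose induced subtournament is isomorphic to R₄. -/

import Mathlib

/-- A tournament on `n` vertices: an irreflexive relation such that for every
pair of distinct vertices exactly one direction holds. -/
structure Tournament (n : ℕ) where
  rel : Fin n → Fin n → Bool
  irrefl : ∀ v, rel v v = false
  total : ∀ u v, u ≠ v → rel u v = !rel v u

/-- The transitive tournament `Tr_k`. -/
def Tr (k : ℕ) : Tournament k where
  rel i j := decide (i < j)
  irrefl v := by simp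
  total u v h := by
    rcases lt_or_gt_of_ne h with h' | h'
    · simp [h', h'.le, not_lt_of_gt h']
    · simp [h', h'.le, not_lt_of_gt h']

/-- The cyclic triangle. -/
def C3 : Tournament 3 where
  rel := ![![false, true, false], ![false, false, true], ![true, false, false]]
  irrefl := by decide
  total := by decide

/-- `W₄`: the non-transitive tournament on 4 vertices with a "winner". -/
def W4 : Tournament 4 where
  rel := ![![false, true, true, true], ![false, false, true, false],
           ![false, false, false, true], ![false, true, false, false]]
  irrefl := by decide
  total := by decide

/-- `L₄`: the non-transitive tournament on 4 vertices with a "loser". -/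
def L4 : Tournament 4 where
  rel := ![![false, true, false, true], ![false, false, true, true],
           ![true, false, false, true], ![false, false, false, false]]
  irrefl := by decide
  total := by decide

/-- `R₄`: the tournament on 4 vertices with out-degree sequence (1,1,2,2). -/
def R4 : Tournament 4 where
  rel := ![![false, true, true, false], ![false, false, true, true],
           ![false, false, false, true], ![true, false, false, false]]
  irrefl := by decide
  total := by decide

/-- Two tournaments on the same number of vertices are isomorphic if some
permutation of the vertices carries one arc relation to the other. -/
def Isomorphic {k : ℕ} (S T : Tournament k) : Prop :=
  ∃ e : Equiv.Perm (Fin k), ∀ i j, S.rel i j = T.rel (e i) (e j)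

/-- The subtournament of `T` induced on the subset `A` is isomorphic to `S`. -/
def IsoOn {k n : ℕ} (S : Tournament k) (T : Tournament n) (A : Finset (Fin n)) : Prop :=
  ∃ f : Fin k → Fin n, Function.Injective f ∧ Finset.univ.image f = A ∧
    ∀ i j, S.rel i j = T.rel (f i) (f j)

open scoped Classical in
/-- The number of `k`-element subsets of the vertex set of `T` whose induced
subtournament is isomorphic to `S` (where `S` has `k` vertices). -/
noncomputable def copyCount {k n : ℕ} (S : Tournament k) (T : Tournament n) : ℕ :=
  ((Finset.powersetCard k (Finset.univ : Finset (Fin n))).filter (IsoOn S T)).card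

/-- The (unlabelled) density `p(S, T)`. -/
noncomputable def density {k n : ℕ} (S : Tournament k) (T : Tournament n) : ℝ :=
  (copyCount S T : ℝ) / (n.choose k : ℝ)

/-- The number of automorphisms of a tournament. -/
def autCount {k : ℕ} (S : Tournament k) : ℕ :=
  (Finset.univ.filter
    (fun e : Equiv.Perm (Fin k) => ∀ i j, S.rel i j = S.rel (e i) (e j))).card

/-- A sequence of tournaments with growing vertex sets is quasi-random if every
fixed tournament `S` on `k` vertices appears with density tending to
`k! / (|Aut S| * 2^(k(k-1)/2))`. -/
def QuasiRandom {nn : ℕ → ℕ} (T : ∀ j, Tournament (nn j)) : Prop :=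
  ∀ (k : ℕ) (S : Tournament k),
    Filter.Tendsto (fun j => density S (T j)) Filter.atTop
      (nhds ((k.factorial : ℝ) / ((autCount S : ℝ) * 2 ^ (k * (k - 1) / 2))))

/-- `D(u,v) = #{w : u→w ∧ w→v}`. -/
def Dcount {n : ℕ} (T : Tournament n) (u v : Fin n) : ℕ :=
  (Finset.univ.filter (fun w => T.rel u w ∧ T.rel w v)).card

/-- `C(u,v) = #{w : v→w ∧ w→u}`. -/
def Ccount {n : ℕ} (T : Tournament n) (u v : Fin n) : ℕ :=
  (Finset.univ.filter (fun w => T.rel v w ∧ T.rel w u)).card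

/-- `I(u,v) = #{w : w→u ∧ w→v}`. -/
def Icount {n : ℕ} (T : Tournament n) (u v : Fin n) : ℕ :=
  (Finset.univ.filter (fun w => T.rel w u ∧ T.rel w v)).card

/-- `O(u,v) = #{w : u→w ∧ v→w}`. -/
def Ocount {n : ℕ} (T : Tournament n) (u v : Fin n) : ℕ :=
  (Finset.univ.filter (fun w => T.rel u w ∧ T.rel v w)).card

/-- The subset `A` induces a transitive subtournament of `T`. -/
def IsTransOn {n : ℕ} (T : Tournament n) (A : Finset (Fin n)) : Prop :=
  ∀ u ∈ A, ∀ v ∈ A, ∀ w ∈ A, T.rel u v → T.rel v w → T.rel u w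

open scoped Classical in
/-- `tr_m(T)`: the number of `m`-element subsets of the vertex set of `T`
inducing a transitive subtournament. -/
noncomputable def trCount (m : ℕ) {n : ℕ} (T : Tournament n) : ℕ :=
  ((Finset.powersetCard m (Finset.univ : Finset (Fin n))).filter (IsTransOn T)).card

/-- The subtournament of `T` induced on a subset `A` of its vertices. -/
noncomputable def induce {n : ℕ} (T : Tournament n) (A : Finset (Fin n)) :
    Tournament A.card where
  rel i j := T.rel (A.orderIsoOfFin rfl i) (A.orderIsoOfFin rfl j)
  irrefl i := T.irrefl _
  total i j h := T.total _ _ (fun hc => h ((A.orderIsoOfFin rfl).injective (Subtype.ext hc)))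

/-- The out-neighbourhood `N⁺(u)` of a vertex. -/
def outSet {n : ℕ} (T : Tournament n) (u : Fin n) : Finset (Fin n) :=
  Finset.univ.filter (fun w => T.rel u w)

/-- The out-degree of a vertex. -/
def outDeg {n : ℕ} (T : Tournament n) (v : Fin n) : ℕ :=
  (Finset.univ.filter (fun w => T.rel v w)).card

/-- The multiset of out-degrees of a tournament. -/
def outDegs {n : ℕ} (T : Tournament n) : Multiset ℕ :=
  Finset.univ.val.map (outDeg T)

/-- The arc relation of `T` is transitive. -/
def IsTransitiveT {k : ℕ} (S : Tournament k) : Prop :=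
  ∀ u v w, S.rel u v → S.rel v w → S.rel u w


section Aux

lemma Tournament.ne_of_rel {n : ℕ} (T : Tournament n) {u v : Fin n}
    (h : T.rel u v = true) : u ≠ v := by
  rintro rfl
  rw [T.irrefl] at h
  exact Bool.false_ne_true h

lemma Tournament.rel_rev {n : ℕ} (T : Tournament n) {u v : Fin n}
    (h : T.rel u v = true) : T.rel v u = false := by
  rw [T.total v u (T.ne_of_rel h).symm, h]
  rfl

lemma R4_config : ∀ a b c d : Fin 4, R4.rel a b = true → R4.rel b c = true →
    R4.rel c a = true → R4.rel b d = true → R4.rel d a = true → c ≠ d →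
    (a = 3 ∧ b = 0 ∧ c = 1 ∧ d = 2) ∨ (a = 3 ∧ b = 0 ∧ c = 2 ∧ d = 1) := by
  decide

section H
variable {α : Type*}

lemma inj4 {a b c d : α} (hab : a ≠ b) (hac : a ≠ c) (had : a ≠ d)
    (hbc : b ≠ c) (hbd : b ≠ d) (hcd : c ≠ d) : Function.Injective ![a, b, c, d] := by
  intro i j hij
  fin_cases i <;> fin_cases j <;>
      simp only [Matrix.cons_val_zero, Matrix.cons_val_one, Matrix.head_cons, Matrix.cons_val_two,
        Matrix.tail_cons, Matrix.cons_val_three] at hij <;>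
    first
      | rfl
      | exact absurd hij (by assumption)
      | exact absurd hij.symm (by assumption)

lemma image4 [DecidableEq α] (a b c d : α) :
    Finset.univ.image ![a, b, c, d] = {a, b, c, d} := by
  ext y
  simp only [Finset.mem_image, Finset.mem_univ, true_and, Finset.mem_insert, Finset.mem_singleton]
  constructor
  · rintro ⟨i, rfl⟩
    fin_cases i <;> simp
  · rintro (rfl | rfl | rfl | rfl)
    exacts [⟨0, by simp⟩, ⟨1, by simp⟩,
      ⟨2, by simp only [Matrix.cons_val_two, Matrix.tail_cons, Matrix.head_cons]⟩,
      ⟨3, by simp only [Matrix.cons_val_three, Matrix.tail_cons, Matrix.head_cons]⟩]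

lemma image_eq4a [DecidableEq α] (f : Fin 4 → α) :
    ({f 3, f 0, f 1, f 2} : Finset α) = Finset.univ.image f := by
  ext y
  simp only [Finset.mem_insert, Finset.mem_singleton, Finset.mem_image, Finset.mem_univ, true_and]
  constructor
  · rintro (rfl | rfl | rfl | rfl)
    exacts [⟨3, rfl⟩, ⟨0, rfl⟩, ⟨1, rfl⟩, ⟨2, rfl⟩]
  · rintro ⟨i, rfl⟩
    fin_cases i <;> tauto

lemma image_eq4b [DecidableEq α] (f : Fin 4 → α) :
    ({f 3, f 0, f 2, f 1} : Finset α) = Finset.univ.image f := by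
  ext y
  simp only [Finset.mem_insert, Finset.mem_singleton, Finset.mem_image, Finset.mem_univ, true_and]
  constructor
  · rintro (rfl | rfl | rfl | rfl)
    exacts [⟨3, rfl⟩, ⟨0, rfl⟩, ⟨2, rfl⟩, ⟨1, rfl⟩]
  · rintro ⟨i, rfl⟩
    fin_cases i <;> tauto
end H

end Aux

/-- `Σ_{arcs (u,v)} C(u,v)(C(u,v)-1) = 2 · r₄(T)`. -/
theorem sum_C_pairs_eq_two_r4 (n : ℕ) (T : Tournament n) :
    (∑ u, ∑ v, if T.rel u v then Ccount T u v * (Ccount T u v - 1) else 0) =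
      2 * copyCount R4 T := by
  classical
  let P : Fin n × Fin n × Fin n × Fin n → Prop := fun q =>
    T.rel q.1 q.2.1 = true ∧ T.rel q.2.1 q.2.2.1 = true ∧ T.rel q.2.2.1 q.1 = true ∧
    T.rel q.2.1 q.2.2.2 = true ∧ T.rel q.2.2.2 q.1 = true ∧ q.2.2.1 ≠ q.2.2.2
  have step : ∀ u v : Fin n,
      (if T.rel u v then Ccount T u v * (Ccount T u v - 1) else 0)
        = (Finset.univ.filter (fun p : Fin n × Fin n => P (u, v, p))).card := by
    intro u v
    by_cases h : T.rel u v = true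
    · rw [if_pos h]
      have hset : (Finset.univ.filter (fun p : Fin n × Fin n => P (u, v, p)))
          = (Finset.univ.filter (fun w => T.rel v w ∧ T.rel w u)).offDiag := by
        ext p
        simp only [P, Finset.mem_filter, Finset.mem_offDiag, Finset.mem_univ, true_and, h,
          true_and]
        tauto
      rw [hset, Finset.offDiag_card, Ccount]
      rw [Nat.mul_sub, Nat.mul_one]
    · rw [if_neg h]
      have hset : (Finset.univ.filter (fun p : Fin n × Fin n => P (u, v, p))) = ∅ := by
        ext p
        simp only [P, Finset.mem_filter, Finset.notMem_empty, iff_false]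
        tauto
      rw [hset, Finset.card_empty]
  have key : (∑ u, ∑ v, if T.rel u v then Ccount T u v * (Ccount T u v - 1) else 0)
      = (Finset.univ.filter P).card := by
    rw [Finset.card_filter, Fintype.sum_prod_type]
    refine Finset.sum_congr rfl fun u _ => ?_
    rw [Fintype.sum_prod_type]
    refine Finset.sum_congr rfl fun v _ => ?_
    rw [step u v, Finset.card_filter]
  rw [key]
  let g : Fin n × Fin n × Fin n × Fin n → Finset (Fin n) :=
    fun q => {q.1, q.2.1, q.2.2.1, q.2.2.2}
  have hmap : ∀ q ∈ Finset.univ.filter P, g q ∈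
      (Finset.powersetCard 4 (Finset.univ : Finset (Fin n))).filter (IsoOn R4 T) := by
    rintro ⟨u, v, w, x⟩ hq
    rw [Finset.mem_filter] at hq
    obtain ⟨-, h1, h2, h3, h4, h5, hwx⟩ := hq
    dsimp only at h1 h2 h3 h4 h5 hwx
    have huv : u ≠ v := T.ne_of_rel h1
    have hvw : v ≠ w := T.ne_of_rel h2
    have hwu : w ≠ u := T.ne_of_rel h3
    have hvx : v ≠ x := T.ne_of_rel h4
    have hxu : x ≠ u := T.ne_of_rel h5
    have h1' := T.rel_rev h1
    have h2' := T.rel_rev h2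
    have h3' := T.rel_rev h3
    have h4' := T.rel_rev h4
    have h5' := T.rel_rev h5
    have hcard : ({u, v, w, x} : Finset (Fin n)).card = 4 := by
      rw [Finset.card_insert_of_notMem (by simp [huv, Ne.symm hwu, Ne.symm hxu]),
        Finset.card_insert_of_notMem (by simp [hvw, hvx]),
        Finset.card_insert_of_notMem (by simp [hwx]), Finset.card_singleton]
    rw [Finset.mem_filter, Finset.mem_powersetCard]
    refine ⟨⟨Finset.subset_univ _, hcard⟩, ?_⟩
    have huniv4 : (Finset.univ : Finset (Fin 4)) = {0, 1, 2, 3} := by decide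
    by_cases hwxr : T.rel w x = true
    · refine ⟨![v, w, x, u], inj4 hvw hvx huv.symm hwx hwu hxu, ?_, ?_⟩
      · rw [image4]
        show ({v, w, x, u} : Finset (Fin n)) = {u, v, w, x}
        ext y
        simp only [Finset.mem_insert, Finset.mem_singleton]
        tauto
      · intro i j
        fin_cases i <;> fin_cases j <;>
          simp [R4, Matrix.vecHead, Matrix.vecTail, T.irrefl, h1, h1', h2, h2', h3, h3', h4, h4', h5, h5', hwxr, T.rel_rev hwxr]
    · have hwxf : T.rel w x = false := by
        revert hwxr; cases T.rel w x <;> simp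
      have hxwr : T.rel x w = true := by
        rw [T.total x w (Ne.symm hwx), hwxf]
        rfl
      refine ⟨![v, x, w, u], inj4 hvx hvw huv.symm (Ne.symm hwx) hxu hwu, ?_, ?_⟩
      · rw [image4]
        show ({v, x, w, u} : Finset (Fin n)) = {u, v, w, x}
        ext y
        simp only [Finset.mem_insert, Finset.mem_singleton]
        tauto
      · intro i j
        fin_cases i <;> fin_cases j <;>
          simp [R4, Matrix.vecHead, Matrix.vecTail, T.irrefl, h1, h1', h2, h2', h3, h3', h4, h4', h5, h5', hxwr, T.rel_rev hxwr]
  rw [Finset.card_eq_sum_card_fiberwise hmap]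
  have hfib : ∀ A ∈ (Finset.powersetCard 4 (Finset.univ : Finset (Fin n))).filter (IsoOn R4 T),
      ((Finset.univ.filter P).filter (fun q => g q = A)).card = 2 := by
    intro A hA
    rw [Finset.mem_filter] at hA
    obtain ⟨-, f, hinj, himg, hrel⟩ := hA
    have huniv4 : (Finset.univ : Finset (Fin 4)) = {0, 1, 2, 3} := by decide
    have hpair : ((Finset.univ.filter P).filter (fun q => g q = A))
        = {(f 3, f 0, f 1, f 2), (f 3, f 0, f 2, f 1)} := by
      ext ⟨u, v, w, x⟩
      simp only [Finset.mem_filter, Finset.mem_insert, Finset.mem_singleton, Finset.mem_univ,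
        true_and]
      constructor
      · rintro ⟨⟨h1, h2, h3, h4, h5, hwx⟩, hgA⟩
        have hu : u ∈ A := by
          rw [← hgA]; show u ∈ ({u, v, w, x} : Finset (Fin n)); simp
        have hv : v ∈ A := by
          rw [← hgA]; show v ∈ ({u, v, w, x} : Finset (Fin n)); simp
        have hw : w ∈ A := by
          rw [← hgA]; show w ∈ ({u, v, w, x} : Finset (Fin n)); simp
        have hx : x ∈ A := by
          rw [← hgA]; show x ∈ ({u, v, w, x} : Finset (Fin n)); simp
        rw [← himg, Finset.mem_image] at hu hv hw hx
        obtain ⟨a, -, ha⟩ := hu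
        obtain ⟨b, -, hb⟩ := hv
        obtain ⟨c, -, hc⟩ := hw
        obtain ⟨d, -, hd⟩ := hx
        subst ha hb hc hd
        rw [← hrel] at h1 h2 h3 h4 h5
        have hcd : c ≠ d := fun h => hwx (by rw [h])
        rcases R4_config a b c d h1 h2 h3 h4 h5 hcd with ⟨rfl, rfl, rfl, rfl⟩ | ⟨rfl, rfl, rfl, rfl⟩
        · left; rfl
        · right; rfl
      · rintro (h | h) <;> rw [Prod.ext_iff, Prod.ext_iff, Prod.ext_iff] at h <;>
          obtain ⟨rfl, rfl, rfl, rfl⟩ := h <;>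
          refine ⟨⟨?_, ?_, ?_, ?_, ?_, fun hh => absurd (hinj hh) (by decide)⟩, ?_⟩ <;>
          first
            | (rw [← hrel]; rfl)
            | (rw [← himg]
               first
                 | exact image_eq4a f
                 | exact image_eq4b f)
    rw [hpair, Finset.card_insert_of_notMem, Finset.card_singleton]
    simp only [Finset.mem_singleton, Prod.mk.injEq, not_and]
    intro _ _ hh _
    exact absurd (hinj hh) (by decide)
  rw [Finset.sum_congr rfl hfib, Finset.sum_const, smul_eq_mul, mul_comm, copyCount]
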